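/- For every integer N ≥ 1 and every k with 0 ≤ k ≤ N, the transition matrix of the k-ball Ehrenfest model is a Krawtchouk polynomial evaluated at the classical Ehrenfest matrix: J_k = K_k( -N(J_1 - I)/2 ), i.e., J_k equals the evaluation of the real polynomial x ↦ K_k(-N(x-1)/2) at the matrix J_1, where I is the (N+1)×(N+1) identity matrix and J_1 = M_0 is the tridiagonal matrix with (J_1)_{i,i-1} = i/N and (J_1)_{i,i+1} = (N-i)/N. -/

import Mathlib

/-- The transition matrix `J_k` of the `k`-ball Ehrenfest model. -/
noncomputable def kBall (N k : ℕ) : Matrix (Fin (N + 1)) (Fin (N + 1)) ℝ :=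
  fun i j =>
    ∑ ℓ ∈ Finset.range (k + 1),
      if (j : ℤ) = (i : ℤ) - (k : ℤ) + 2 * (ℓ : ℤ) then
        (((i : ℕ).choose (k - ℓ) * (N - (i : ℕ)).choose ℓ : ℕ) : ℝ) / (N.choose k : ℝ)
      else 0

section kBallAux




-- nat helpers
lemma h1' (n a : ℕ) : n * (n-1).choose a = (a+1) * n.choose (a+1) := by
  cases n with
  | zero => simp
  | succ n =>
    simpa [Nat.succ_sub_one, mul_comm] using (Nat.add_one_mul_choose_eq n a)

lemma h2' (n a : ℕ) : (a+1) * n.choose (a+1) = (n - a) * n.choose a := by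
  rw [mul_comm, Nat.choose_succ_right_eq, mul_comm]

lemma keyNat (u v a p : ℕ) :
    (a+1) * u.choose (a+1) * v.choose p + (p+1) * v.choose (p+1) * u.choose a
      = (u+v-(a+p)) * (u.choose a * v.choose p) := by
  rw [h2' u a, h2' v p]
  rcases Nat.lt_or_ge u a with h | h
  · simp [Nat.choose_eq_zero_of_lt h]
  · rcases Nat.lt_or_ge v p with h' | h'
    · simp [Nat.choose_eq_zero_of_lt h']
    · have hw : u - a + (v - p) = u + v - (a+p) := by omega
      rw [← hw, Nat.add_mul]; ring

lemma pureR (u v a p : ℕ) :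
    (u:ℝ) * ((u-1).choose a) * ((v+1).choose (p+1))
      + (v:ℝ) * ((u+1).choose (a+1)) * ((v-1).choose p)
    = ((a:ℝ)+p+2) * ((u.choose (a+1)) * (v.choose (p+1)))
      + ((u+v-(a+p):ℕ):ℝ) * ((u.choose a) * (v.choose p)) := by
  have P1 : (u:ℝ) * ((u-1).choose a) = ((a:ℝ)+1) * u.choose (a+1) := by
    exact_mod_cast congrArg (Nat.cast (R := ℝ)) (h1' u a)
  have P2 : (v:ℝ) * ((v-1).choose p) = ((p:ℝ)+1) * v.choose (p+1) := by
    exact_mod_cast congrArg (Nat.cast (R := ℝ)) (h1' v p)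
  have Q1 : (((u+1).choose (a+1) : ℕ):ℝ) = u.choose a + u.choose (a+1) := by
    exact_mod_cast congrArg (Nat.cast (R := ℝ)) (Nat.choose_succ_succ u a)
  have Q2 : (((v+1).choose (p+1) : ℕ):ℝ) = v.choose p + v.choose (p+1) := by
    exact_mod_cast congrArg (Nat.cast (R := ℝ)) (Nat.choose_succ_succ v p)
  have K : ((a:ℝ)+1) * u.choose (a+1) * v.choose p + ((p:ℝ)+1) * v.choose (p+1) * u.choose a
      = ((u+v-(a+p):ℕ):ℝ) * (u.choose a * v.choose p) := by
    exact_mod_cast congrArg (Nat.cast (R := ℝ)) (keyNat u v a p)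
  linear_combination (((v+1).choose (p+1):ℕ):ℝ) * P1 + ((a:ℝ)+1) * ((u.choose (a+1):ℕ):ℝ) * Q2
    + (((u+1).choose (a+1):ℕ):ℝ) * P2 + ((p:ℝ)+1) * ((v.choose (p+1):ℕ):ℝ) * Q1 + K

noncomputable def E (N k : ℕ) (a b : ℤ) : ℝ :=
  if 2 ∣ (b - a + k) ∧ 0 ≤ b - a + k ∧ b - a + k ≤ 2*k then
    ((a.toNat.choose (k - ((b - a + k)/2).toNat)
        * ((N:ℤ) - a).toNat.choose (((b - a + k)/2).toNat) : ℕ) : ℝ) / (N.choose k : ℝ)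
  else 0

lemma kBall_eq_E (N k : ℕ) (i j : Fin (N+1)) : kBall N k i j = E N k (i : ℤ) (j : ℤ) := by
  have hiN : (i : ℕ) ≤ N := by omega
  unfold kBall E
  by_cases h : 2 ∣ ((j:ℤ) - (i:ℤ) + k) ∧ 0 ≤ (j:ℤ) - (i:ℤ) + k ∧ (j:ℤ) - (i:ℤ) + k ≤ 2*k
  · rw [if_pos h]
    obtain ⟨⟨e, he⟩, h0, h2k⟩ := h
    rw [Finset.sum_eq_single ((((j:ℤ) - (i:ℤ) + k)/2).toNat)]
    · rw [if_pos (by omega)]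
      have e1 : ((i:ℤ)).toNat = (i:ℕ) := by omega
      have e2 : ((N:ℤ) - (i:ℤ)).toNat = N - (i:ℕ) := by omega
      rw [e1, e2]
    · intro ℓ hℓ hne
      rw [if_neg]
      intro hc
      apply hne
      omega
    · intro hmem
      exfalso
      apply hmem
      simp only [Finset.mem_range]
      omega
  · rw [if_neg h]
    apply Finset.sum_eq_zero
    intro ℓ hℓ
    rw [if_neg]
    intro hc
    apply h
    simp only [Finset.mem_range] at hℓ
    refine ⟨⟨ℓ, by omega⟩, by omega, by omega⟩

lemma oneBall_apply (N : ℕ) (i x : Fin (N+1)) :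
    kBall N 1 i x = (if (x:ℤ) = (i:ℤ) - 1 then ((i:ℕ):ℝ)/N else 0)
      + (if (x:ℤ) = (i:ℤ) + 1 then ((N - (i:ℕ) : ℕ):ℝ)/N else 0) := by
  unfold kBall
  rw [Finset.sum_range_succ, Finset.sum_range_succ, Finset.sum_range_zero, zero_add]
  congr 1
  · rw [show ((i:ℤ) - (1:ℕ) + 2*((0:ℕ):ℤ)) = (i:ℤ) - 1 by push_cast; ring]
    norm_num [Nat.choose_one_right]
  · rw [show ((i:ℤ) - (1:ℕ) + 2*((1:ℕ):ℤ)) = (i:ℤ) + 1 by push_cast; ring]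
    norm_num [Nat.choose_one_right]

lemma collapse {n : ℕ} (t : ℤ) (f : Fin (n+1) → ℝ) (g : ℝ)
    (hg : ∀ x : Fin (n+1), (x:ℤ) = t → f x = g)
    (h0 : (t < 0 ∨ (n:ℤ) < t) → g = 0) :
    (∑ x : Fin (n+1), if (x:ℤ) = t then f x else 0) = g := by
  by_cases h : 0 ≤ t ∧ t ≤ n
  · have hlt : t.toNat < n + 1 := by omega
    rw [Finset.sum_eq_single (⟨t.toNat, hlt⟩ : Fin (n+1))]
    · have hv : ((⟨t.toNat, hlt⟩ : Fin (n+1)) : ℤ) = t := by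
        show ((t.toNat : ℕ) : ℤ) = t
        omega
      rw [if_pos hv]
      exact hg _ hv
    · intro x _ hne
      rw [if_neg]
      intro hc
      exact hne (Fin.ext (show (x:ℕ) = t.toNat by omega))
    · simp
  · rw [Finset.sum_eq_zero, (h0 (by omega)).symm]
    intro x _
    rw [if_neg]
    intro hc
    have := x.isLt
    omega

lemma mul_entry (N k : ℕ) (i j : Fin (N+1)) :
    (kBall N 1 * kBall N k) i j
      = ((i:ℕ):ℝ)/N * E N k ((i:ℤ)-1) (j:ℤ)
        + ((N - (i:ℕ) : ℕ):ℝ)/N * E N k ((i:ℤ)+1) (j:ℤ) := by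
  rw [Matrix.mul_apply]
  have step : ∀ x : Fin (N+1), kBall N 1 i x * kBall N k x j =
      (if (x:ℤ) = (i:ℤ)-1 then ((i:ℕ):ℝ)/N * kBall N k x j else 0)
        + (if (x:ℤ) = (i:ℤ)+1 then ((N - (i:ℕ) : ℕ):ℝ)/N * kBall N k x j else 0) := by
    intro x
    rw [oneBall_apply]
    split_ifs <;> ring
  rw [Finset.sum_congr rfl (fun x _ => step x), Finset.sum_add_distrib]
  congr 1
  · apply collapse
    · intro x hx
      rw [kBall_eq_E, hx]
    · intro h
      have hi0 : (i : ℕ) = 0 := by have := i.isLt; omega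
      simp [hi0]
  · apply collapse
    · intro x hx
      rw [kBall_eq_E, hx]
    · intro h
      have hiN : (i : ℕ) = N := by have := i.isLt; omega
      simp [hiN]

lemma key_entry (N m : ℕ) (i j : ℕ) (hi : i ≤ N) (hj : j ≤ N) (hm : m + 2 ≤ N) :
    (i:ℝ) * E N (m+1) ((i:ℤ)-1) (j:ℤ) + ((N-i:ℕ):ℝ) * E N (m+1) ((i:ℤ)+1) (j:ℤ)
      = ((N-(m+1):ℕ):ℝ) * E N (m+2) (i:ℤ) (j:ℤ) + ((m+1:ℕ):ℝ) * E N m (i:ℤ) (j:ℤ) := by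
  have hD1 : (0:ℝ) < (N.choose (m+1) : ℝ) := by
    exact_mod_cast Nat.choose_pos (by omega : m+1 ≤ N)
  have hD2 : (0:ℝ) < (N.choose (m+2) : ℝ) := by
    exact_mod_cast Nat.choose_pos (by omega : m+2 ≤ N)
  have hD3 : (0:ℝ) < (N.choose m : ℝ) := by
    exact_mod_cast Nat.choose_pos (by omega : m ≤ N)
  simp only [E]
  rw [show (j:ℤ) - (i:ℤ) + ((m:ℕ):ℤ) = (j:ℤ) - i + m + 2 - 2 by push_cast; ring]
  rw [show (j:ℤ) - ((i:ℤ)-1) + ((m+1:ℕ):ℤ) = (j:ℤ) - i + m + 2 by push_cast; ring]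
  rw [show (j:ℤ) - ((i:ℤ)+1) + ((m+1:ℕ):ℤ) = (j:ℤ) - i + m + 2 - 2 by push_cast; ring]
  rw [show (j:ℤ) - (i:ℤ) + ((m+2:ℕ):ℤ) = (j:ℤ) - i + m + 2 by push_cast; ring]
  set d : ℤ := (j:ℤ) - i + m + 2 with hd
  rw [show ((i:ℤ)-1).toNat = i - 1 by omega]
  rw [show ((N:ℤ) - ((i:ℤ)-1)).toNat = N - i + 1 by omega]
  rw [show ((i:ℤ)+1).toNat = i + 1 by omega]
  rw [show ((N:ℤ) - ((i:ℤ)+1)).toNat = N - i - 1 by omega]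
  rw [show ((i:ℤ)).toNat = i by omega]
  rw [show ((N:ℤ) - ((i:ℤ))).toNat = N - i by omega]
  by_cases hdvd : 2 ∣ d
  · by_cases hrange : 0 ≤ d ∧ d ≤ 2*(m+2)
    · set ℓ : ℕ := (d/2).toNat with hℓ
      have hl2 : 2 * (ℓ:ℤ) = d := by omega
      rw [show ((d-2)/2).toNat = ℓ - 1 by omega]
      have hlm : ℓ ≤ m + 2 := by omega
      rcases Nat.eq_zero_or_pos ℓ with hl0 | hl1
      · -- ℓ = 0
        rw [if_pos (by omega), if_neg (by omega), if_pos (by omega), if_neg (by omega)]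
        rw [hl0]
        norm_num
        have A1 : (i:ℝ) * ((i-1).choose (m+1)) = ((m:ℝ)+2) * (i.choose (m+2)) := by
          exact_mod_cast congrArg (Nat.cast (R := ℝ)) (h1' i (m+1))
        have A2 : ((m:ℝ)+2) * (N.choose (m+2)) = ((N-(m+1):ℕ):ℝ) * (N.choose (m+1)) := by
          exact_mod_cast congrArg (Nat.cast (R := ℝ)) (h2' N (m+1))
        field_simp
        linear_combination ((N.choose (m+2):ℕ):ℝ) * A1 + ((i.choose (m+2):ℕ):ℝ) * A2
      · rcases Nat.lt_or_ge ℓ (m+2) with hlt | hge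
        · -- 1 ≤ ℓ ≤ m+1
          rw [if_pos (by omega), if_pos (by omega), if_pos (by omega), if_pos (by omega)]
          rw [show m+1-(ℓ-1) = m+2-ℓ by omega, show m - (ℓ-1) = m+1-ℓ by omega]
          have P := pureR i (N-i) (m+1-ℓ) (ℓ-1)
          rw [show (ℓ-1)+1 = ℓ by omega, show (m+1-ℓ)+1 = m+2-ℓ by omega,
            show i + (N-i) - ((m+1-ℓ)+(ℓ-1)) = N - m by omega] at P
          have hco : ((m+1-ℓ:ℕ):ℝ) + ((ℓ-1:ℕ):ℝ) + 2 = (m:ℝ)+2 := by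
            push_cast [Nat.cast_sub (by omega : ℓ ≤ m+1), Nat.cast_sub (by omega : 1 ≤ ℓ)]
            ring
          rw [hco] at P
          rw [Nat.cast_sub hi] at P
          have A2 : ((m:ℝ)+2) * (N.choose (m+2)) = ((N-(m+1):ℕ):ℝ) * (N.choose (m+1)) := by
            exact_mod_cast congrArg (Nat.cast (R := ℝ)) (h2' N (m+1))
          have A3 : ((m:ℝ)+1) * (N.choose (m+1)) = ((N-m:ℕ):ℝ) * (N.choose m) := by
            exact_mod_cast congrArg (Nat.cast (R := ℝ)) (h2' N m)
          push_cast
          field_simp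
          linear_combination ((N.choose (m+2):ℕ):ℝ) * ((N.choose m:ℕ):ℝ) * P
            + ((i.choose (m+2-ℓ):ℕ):ℝ) * (((N-i).choose ℓ:ℕ):ℝ) * ((N.choose m:ℕ):ℝ) * A2
            - ((i.choose (m+1-ℓ):ℕ):ℝ) * (((N-i).choose (ℓ-1):ℕ):ℝ) * ((N.choose (m+2):ℕ):ℝ) * A3
            + (((i+1).choose (m+2-ℓ):ℕ):ℝ) * (((N-i-1).choose (ℓ-1):ℕ):ℝ) * ((N.choose (m+2):ℕ):ℝ) * ((N.choose m:ℕ):ℝ) * (Nat.cast_sub hi : ((N-i:ℕ):ℝ) = N - i)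
        · -- ℓ = m+2
          have hl : ℓ = m+2 := by omega
          rw [if_neg (by omega), if_pos (by omega), if_pos (by omega), if_neg (by omega)]
          rw [hl]
          norm_num
          have B1 : ((N-i:ℕ):ℝ) * ((N-i-1).choose (m+1)) = ((m:ℝ)+2) * ((N-i).choose (m+2)) := by
            exact_mod_cast congrArg (Nat.cast (R := ℝ)) (h1' (N-i) (m+1))
          have A2 : ((m:ℝ)+2) * (N.choose (m+2)) = ((N-(m+1):ℕ):ℝ) * (N.choose (m+1)) := by
            exact_mod_cast congrArg (Nat.cast (R := ℝ)) (h2' N (m+1))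
          rw [Nat.cast_sub hi] at B1
          field_simp
          linear_combination ((N.choose (m+2):ℕ):ℝ) * B1 + (((N-i).choose (m+2):ℕ):ℝ) * A2
            + (((N-i-1).choose (m+1):ℕ):ℝ) * ((N.choose (m+2):ℕ):ℝ) * (Nat.cast_sub hi : ((N-i:ℕ):ℝ) = N - i)
    · rw [if_neg (by omega), if_neg (by omega), if_neg (by omega), if_neg (by omega)]
      ring
  · rw [if_neg (by omega), if_neg (by omega), if_neg (by omega), if_neg (by omega)]
    ring

lemma kBall_zero (N : ℕ) : kBall N 0 = 1 := by
  ext i j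
  unfold kBall
  rw [Finset.sum_range_succ, Finset.sum_range_zero, zero_add]
  rcases eq_or_ne i j with rfl | hne
  · rw [if_pos (by push_cast; ring), Matrix.one_apply_eq]
    simp
  · rw [if_neg, Matrix.one_apply_ne hne]
    intro hc
    exact hne (Fin.ext (by omega))

lemma kBall_rec (N m : ℕ) (h : m + 2 ≤ N) :
    (N:ℝ) • (kBall N 1 * kBall N (m+1))
      = ((N-(m+1):ℕ):ℝ) • kBall N (m+2) + ((m+1:ℕ):ℝ) • kBall N m := by
  ext i j
  simp only [Matrix.smul_apply, Matrix.add_apply, smul_eq_mul]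
  rw [mul_entry, kBall_eq_E N (m+2), kBall_eq_E N m]
  have hN : (N:ℝ) ≠ 0 := Nat.cast_ne_zero.mpr (by omega)
  have expand : ∀ (a x : ℝ), (N:ℝ) * (a / N * x) = a * x := by
    intro a x; field_simp
  rw [mul_add, expand, expand]
  exact key_entry N m i j (by omega) (by omega) h

end kBallAux

/-- `J_k = K_k(-N(J_1 - I)/2)`, i.e. `J_k` is the evaluation of the
real polynomial `x ↦ K_k(-N(x-1)/2)` at the matrix `J_1 = M_0`, where `K_k` are the
Krawtchouk polynomials. -/
theorem kBall_eq_krawtchouk_of_oneBall (N : ℕ) (hN : 1 ≤ N)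
    (K : ℕ → Polynomial ℝ) (hK0 : K 0 = 1)
    (hKrec : ∀ j < N,
      -(Polynomial.X * K j) =
        Polynomial.C (((N : ℝ) - (j : ℕ)) / 2) * K (j + 1)
          - Polynomial.C ((N : ℝ) / 2) * K j
          + Polynomial.C ((j : ℝ) / 2) * K (j - 1))
    (k : ℕ) (hk : k ≤ N) :
    kBall N k
      = Polynomial.aeval (kBall N 1)
          ((K k).comp (Polynomial.C (-(N : ℝ) / 2) * (Polynomial.X - 1))) := by
  set A := kBall N 1 with hA
  set L : Polynomial ℝ := Polynomial.C (-(N : ℝ) / 2) * (Polynomial.X - 1) with hLdef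
  set B : Matrix (Fin (N+1)) (Fin (N+1)) ℝ := Polynomial.aeval A L with hBdef
  have hcomp : ∀ n, Polynomial.aeval A ((K n).comp L) = Polynomial.aeval B (K n) := by
    intro n; rw [Polynomial.aeval_comp]
  have hB : B = (-(N:ℝ)/2) • (A - 1) := by
    rw [hBdef, hLdef]
    rw [map_mul, Polynomial.aeval_C, map_sub, Polynomial.aeval_X, map_one, Algebra.smul_def]
  -- the aeval'd recurrence
  have main : ∀ j, j < N → -(B * Polynomial.aeval B (K j))
      = (((N:ℝ) - (j:ℕ))/2) • Polynomial.aeval B (K (j+1))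
        - ((N:ℝ)/2) • Polynomial.aeval B (K j)
        + (((j:ℕ):ℝ)/2) • Polynomial.aeval B (K (j-1)) := by
    intro j hj
    have := congrArg (Polynomial.aeval B) (hKrec j hj)
    simpa only [map_neg, map_mul, map_sub, map_add, Polynomial.aeval_X,
      Polynomial.aeval_C, ← Algebra.smul_def] using this
  suffices H : ∀ n, (n ≤ N → kBall N n = Polynomial.aeval B (K n))
      ∧ (n + 1 ≤ N → kBall N (n+1) = Polynomial.aeval B (K (n+1))) by
    rw [hcomp]
    exact (H k).1 hk
  intro n
  induction n with
  | zero =>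
    constructor
    · intro _
      rw [hK0, map_one, kBall_zero]
    · intro _
      have E1 := main 0 (by omega)
      rw [hK0, map_one] at E1
      simp only [Nat.cast_zero, Nat.sub_zero, sub_zero, zero_div, zero_smul, add_zero,
        mul_one] at E1
      -- E1 : -B = ((N:ℝ)/2) • aeval B (K 1) - ((N:ℝ)/2) • 1
      have hc : ((N:ℝ)/2) ≠ 0 := by positivity
      refine (smul_right_injective _ hc ?_).symm
      show ((N:ℝ)/2) • Polynomial.aeval B (K (0+1)) = ((N:ℝ)/2) • kBall N (0+1)
      have E2 : ((N:ℝ)/2) • Polynomial.aeval B (K 1) = -B + ((N:ℝ)/2) • 1 := by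
        rw [E1]
        abel
      rw [show (0+1) = 1 from rfl, E2, hB]
      show -((-(N:ℝ)/2) • (A - 1)) + ((N:ℝ)/2) • 1 = ((N:ℝ)/2) • kBall N 1
      rw [← hA]
      module
  | succ n ih =>
    refine ⟨ih.2, ?_⟩
    intro hn2
    have hn1 : n + 1 < N := by omega
    have E1 := main (n+1) hn1
    rw [Nat.add_sub_cancel, ← ih.1 (by omega), ← ih.2 (by omega)] at E1
    -- E1 : -(B * kBall N (n+1)) = c1 • aeval B (K (n+2)) - (N/2) • kBall N (n+1) + ((n+1)/2) • kBall N n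
    have R := kBall_rec N n hn2
    rw [← hA] at R
    have hcast : ((N-(n+1):ℕ):ℝ) = (N:ℝ) - ((n+1:ℕ):ℝ) := by
      rw [Nat.cast_sub (by omega)]
    rw [hcast] at R
    have hc : (((N:ℝ) - ((n+1:ℕ):ℝ))/2) ≠ 0 := by
      have : ((n+1:ℕ):ℝ) < (N:ℝ) := by exact_mod_cast hn1
      have h2 : (0:ℝ) < (N:ℝ) - ((n+1:ℕ):ℝ) := by linarith
      positivity
    refine (smul_right_injective _ hc ?_).symm
    show (((N:ℝ) - ((n+1:ℕ):ℝ))/2) • Polynomial.aeval B (K (n+1+1))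
      = (((N:ℝ) - ((n+1:ℕ):ℝ))/2) • kBall N (n+1+1)
    have E2 : (((N:ℝ) - ((n+1:ℕ):ℝ))/2) • Polynomial.aeval B (K (n+2))
        = -(B * kBall N (n+1)) + ((N:ℝ)/2) • kBall N (n+1) - (((n+1:ℕ):ℝ)/2) • kBall N n := by
      rw [E1]
      abel
    rw [show n+1+1 = n+2 from rfl, E2, hB]
    -- now a linear identity from R
    have R2 : ((N:ℝ)/2) • (A * kBall N (n+1))
        = ((1:ℝ)/2) • (((N:ℝ) - ((n+1:ℕ):ℝ)) • kBall N (n+2) + ((n+1:ℕ):ℝ) • kBall N n) := by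
      rw [← R]
      module
    have lhs_eq : -(((-(N:ℝ)/2) • (A - 1)) * kBall N (n+1))
        = ((N:ℝ)/2) • (A * kBall N (n+1)) - ((N:ℝ)/2) • kBall N (n+1) := by
      rw [smul_mul_assoc, sub_mul, one_mul]
      module
    rw [lhs_eq, R2]
    module
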